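/- Let d ≥ 1, let Q and K be cubes with K ⊆ Q, and let ω : ℝ^d → ℝ be measurable with 0 < δ ≤ ω(x) ≤ 1 for all x and some δ > 0, and suppose |ω(x) − ω(y)| ≤ C₀ (|x − y| / d_Q)^λ for all x, y ∈ Q, where C₀, λ > 0. If a is a measurable function with supp a ⊆ K, ‖a‖_∞ ≤ |K|^{-1}, and ∫_K a(x) ω(x) dx = 0, then |∫_K a(x) dx| ≤ δ^{-1} C₀ (d_K / d_Q)^λ. -/

import Mathlib

open MeasureTheory

noncomputable section

/-- `ℝ^d` as a Euclidean space. -/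
abbrev Rd (d : ℕ) := EuclideanSpace ℝ (Fin d)

/-- A cube in `ℝ^d`, given by its center and (positive) radius. -/
structure Cube (d : ℕ) where
  center : Rd d
  radius : ℝ
  radius_pos : 0 < radius

/-- The underlying open set of a cube: `Q(c,r) = {y : max_i |c_i - y_i| < r}`. -/
def Cube.carrier {d : ℕ} (Q : Cube d) : Set (Rd d) :=
  {y | ∀ i, |Q.center i - y i| < Q.radius}

/-- The diameter `d_Q = 2 √d · r_Q` of a cube. -/
def Cube.diam {d : ℕ} (Q : Cube d) : ℝ := 2 * Real.sqrt d * Q.radius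

lemma Cube.center_mem {d : ℕ} (K : Cube d) : K.center ∈ K.carrier :=
  fun i => by simpa using K.radius_pos

lemma Cube.norm_sub_center_le {d : ℕ} (K : Cube d) {y : Rd d} (hy : y ∈ K.carrier) :
    ‖y - K.center‖ ≤ Real.sqrt d * K.radius := by
  rw [EuclideanSpace.norm_eq]
  have h : ∀ i, ‖(y - K.center) i‖ ^ 2 ≤ K.radius ^ 2 := by
    intro i
    have h1 : |y i - K.center i| ≤ K.radius := by
      rw [abs_sub_comm]; exact (hy i).le
    simpa [Real.norm_eq_abs, sq_abs] using pow_le_pow_left₀ (abs_nonneg _) h1 2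
  calc Real.sqrt (∑ i, ‖(y - K.center) i‖ ^ 2)
      ≤ Real.sqrt (∑ _i : Fin d, K.radius ^ 2) :=
        Real.sqrt_le_sqrt (Finset.sum_le_sum fun i _ => h i)
    _ = Real.sqrt d * K.radius := by
        rw [Finset.sum_const, Finset.card_univ, Fintype.card_fin, nsmul_eq_mul,
          Real.sqrt_mul (by positivity), Real.sqrt_sq K.radius_pos.le]

lemma Cube.isOpen_carrier {d : ℕ} (K : Cube d) : IsOpen K.carrier := by
  have : K.carrier = ⋂ i, {y : Rd d | |K.center i - y i| < K.radius} := by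
    ext y; simp [Cube.carrier, Set.mem_iInter]
  rw [this]
  exact isOpen_iInter_of_finite fun i =>
    isOpen_lt (Continuous.abs (continuous_const.sub (EuclideanSpace.proj i).continuous))
      continuous_const

lemma Cube.volume_pos {d : ℕ} (K : Cube d) : 0 < volume K.carrier :=
  K.isOpen_carrier.measure_pos volume ⟨K.center, K.center_mem⟩

lemma Cube.volume_lt_top {d : ℕ} (K : Cube d) : volume K.carrier < ⊤ := by
  have hsub : K.carrier ⊆ Metric.closedBall K.center (Real.sqrt d * K.radius) := by
    intro y hy
    rw [Metric.mem_closedBall, dist_eq_norm]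
    exact K.norm_sub_center_le hy
  exact lt_of_le_of_lt (measure_mono hsub) (measure_closedBall_lt_top)

/-- if `K ⊆ Q`, `0 < δ ≤ ω ≤ 1`, `ω` is `λ`-Hölder at scale `d_Q` on `Q`,
and `a` is supported in `K` with `‖a‖_∞ ≤ |K|⁻¹` and `∫_K a ω = 0`, then
`|∫_K a| ≤ δ⁻¹ C₀ (d_K/d_Q)^λ`. -/
theorem statement5 (d : ℕ) (hd : 1 ≤ d) (Q K : Cube d)
    (hKQ : K.carrier ⊆ Q.carrier)
    (ω : Rd d → ℝ) (hωmeas : Measurable ω)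
    (δ : ℝ) (hδ : 0 < δ) (hω : ∀ x, δ ≤ ω x ∧ ω x ≤ 1)
    (C₀ l : ℝ) (hC₀ : 0 < C₀) (hl : 0 < l)
    (hHolder : ∀ x ∈ Q.carrier, ∀ y ∈ Q.carrier,
      |ω x - ω y| ≤ C₀ * (‖x - y‖ / Q.diam) ^ l)
    (a : Rd d → ℝ) (hameas : Measurable a)
    (hsupp : Function.support a ⊆ K.carrier)
    (hbound : ∀ᵐ x ∂volume, |a x| ≤ ((volume K.carrier).toReal)⁻¹)
    (hcancel : ∫ x in K.carrier, a x * ω x = 0) :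
    |∫ x in K.carrier, a x| ≤ δ⁻¹ * C₀ * (K.diam / Q.diam) ^ l := by
  set c := K.center with hc
  set V := (volume K.carrier).toReal with hV
  set M := C₀ * (K.diam / Q.diam) ^ l with hM
  have hdpos : (0:ℝ) < Real.sqrt d := Real.sqrt_pos.mpr (by exact_mod_cast hd)
  have hQd : 0 < Q.diam := by
    have := Q.radius_pos; unfold Cube.diam; positivity
  have hKd : 0 < K.diam := by
    have := K.radius_pos; unfold Cube.diam; positivity
  have hVpos : 0 < V :=
    ENNReal.toReal_pos K.volume_pos.ne' K.volume_lt_top.ne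
  have hM0 : 0 ≤ M := by
    apply mul_nonneg hC₀.le
    exact Real.rpow_nonneg (div_nonneg hKd.le hQd.le) l
  -- finite measure instance on restriction
  haveI : IsFiniteMeasure (volume.restrict K.carrier) :=
    ⟨by rw [Measure.restrict_apply_univ]; exact K.volume_lt_top⟩
  -- integrability
  have hIa : IntegrableOn a K.carrier volume := by
    refine ⟨hameas.aestronglyMeasurable, ?_⟩
    apply HasFiniteIntegral.of_bounded (C := V⁻¹)
    exact ae_restrict_of_ae (hbound.mono fun x h => by rwa [Real.norm_eq_abs])
  have hωbd : ∀ x, ‖ω x‖ ≤ 1 := fun x => by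
    rw [Real.norm_eq_abs, abs_of_nonneg (hδ.le.trans (hω x).1)]; exact (hω x).2
  have hIaω : IntegrableOn (fun x => a x * ω x) K.carrier volume := by
    have := Integrable.bdd_mul (c := 1) hIa hωmeas.aestronglyMeasurable.restrict
      (Filter.Eventually.of_forall fun x => hωbd x)
    simpa [mul_comm, IntegrableOn] using this
  have hIg : IntegrableOn (fun x => a x * (ω c - ω x)) K.carrier volume := by
    have : (fun x => a x * (ω c - ω x)) = fun x => a x * ω c - a x * ω x := by
      ext x; ring
    rw [this]
    exact (hIa.mul_const (ω c)).sub hIaω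
  -- pointwise bound
  have hpt : ∀ x, |a x * (ω c - ω x)| ≤ |a x| * M := by
    intro x
    rcases eq_or_ne (a x) 0 with h | h
    · simp [h, hM0]
    · have hxK : x ∈ K.carrier := hsupp h
      have hxQ : x ∈ Q.carrier := hKQ hxK
      have hcQ : c ∈ Q.carrier := hKQ K.center_mem
      have h1 : |ω c - ω x| ≤ C₀ * (‖c - x‖ / Q.diam) ^ l := hHolder c hcQ x hxQ
      have h2 : ‖c - x‖ ≤ K.diam := by
        rw [norm_sub_rev]
        refine (K.norm_sub_center_le hxK).trans ?_
        unfold Cube.diam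
        nlinarith [hdpos, K.radius_pos]
      have h3 : C₀ * (‖c - x‖ / Q.diam) ^ l ≤ M := by
        apply mul_le_mul_of_nonneg_left _ hC₀.le
        apply Real.rpow_le_rpow (div_nonneg (norm_nonneg _) hQd.le) _ hl.le
        gcongr
      rw [abs_mul]
      exact mul_le_mul_of_nonneg_left (h1.trans h3) (abs_nonneg _)
  -- ∫ |a| ≤ 1
  have hIabs : ∫ x in K.carrier, |a x| ≤ 1 := by
    have h1 : ∫ x in K.carrier, |a x| ≤ ∫ _x in K.carrier, V⁻¹ := by
      apply integral_mono_ae hIa.abs (integrable_const _)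
      exact ae_restrict_of_ae hbound
    have h2 : ∫ _x in K.carrier, (V⁻¹ : ℝ) = 1 := by
      rw [setIntegral_const, smul_eq_mul, measureReal_def, ← hV, mul_inv_cancel₀ hVpos.ne']
    linarith
  -- key identity
  have hkey : ω c * (∫ x in K.carrier, a x) = ∫ x in K.carrier, a x * (ω c - ω x) := by
    have : (fun x => a x * (ω c - ω x)) = fun x => a x * ω c - a x * ω x := by
      ext x; ring
    rw [this, integral_sub (hIa.mul_const (ω c)) hIaω, hcancel, sub_zero,
      integral_mul_const, mul_comm]
  -- main estimate
  have hmain : δ * |∫ x in K.carrier, a x| ≤ M := by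
    calc δ * |∫ x in K.carrier, a x|
        ≤ ω c * |∫ x in K.carrier, a x| :=
          mul_le_mul_of_nonneg_right (hω c).1 (abs_nonneg _)
      _ = |ω c * (∫ x in K.carrier, a x)| := by
          rw [abs_mul, abs_of_nonneg (hδ.le.trans (hω c).1)]
      _ = |∫ x in K.carrier, a x * (ω c - ω x)| := by rw [hkey]
      _ ≤ ∫ x in K.carrier, |a x * (ω c - ω x)| := by
          simpa only [Real.norm_eq_abs] using
            norm_integral_le_integral_norm (fun x => a x * (ω c - ω x))
            (μ := volume.restrict K.carrier)
      _ ≤ ∫ x in K.carrier, |a x| * M :=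
          integral_mono hIg.abs (hIa.abs.mul_const M) hpt
      _ = (∫ x in K.carrier, |a x|) * M := integral_mul_const _ _
      _ ≤ 1 * M := mul_le_mul_of_nonneg_right hIabs hM0
      _ = M := one_mul M
  rw [← mul_le_mul_iff_right₀ hδ]
  calc δ * |∫ x in K.carrier, a x| ≤ M := hmain
    _ = δ * (δ⁻¹ * C₀ * (K.diam / Q.diam) ^ l) := by
        rw [hM]; field_simp
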